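/- Let N ≥ 2 and let t_1 t_2 be an admissible block of length 2. Then ⌈(N-1)/2⌉ ≤ t_1 ≤ N-1 and N-1-t_1 ≤ t_2 < t_1, and the topological entropy of the subshift of finite type Z_{t_1 t_2} = {(d_i) : (N-1-t_1)(N-1-t_2) ≤ d_n d_{n+1} ≤ t_1 t_2 for all n ≥ 1} equals log(((2t_1+1−N) + √((2t_1+1−N)² + 4(2t_2+2−N)))/2). -/

import Mathlib

/-- Reflection of a block: each digit `c` becomes `N - 1 - c`. -/
def reflB (N : ℕ) (w : List ℕ) : List ℕ := w.map (fun c => N - 1 - c)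

/-- The block `w` with its last digit incremented by one. -/
def plusB (w : List ℕ) : List ℕ := w.dropLast ++ [w.getLast! + 1]

/-- The `i`-th cyclic rotation of the block `w` (0-indexed). -/
def rotB (w : List ℕ) (i : ℕ) : List ℕ := w.drop i ++ w.take i

/-- The lexicographic inequalities defining admissibility of a block. -/
def AdmissibleIneq (N : ℕ) (w : List ℕ) : Prop :=
  ∀ i < w.length,
    reflB N w ≤ rotB w i ∧ plusB (w.drop i) ++ reflB N (w.take i) ≤ plusB w

/-- An admissible block in `{0, …, N-1}`. -/
def Admissible (N : ℕ) (w : List ℕ) : Prop :=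
  w ≠ [] ∧ (∀ c ∈ w, c < N) ∧ w.getLast! < N - 1 ∧ AdmissibleIneq N w

/-- Prefixes of the generalized Thue–Morse sequence generated by `plusB w`:
`gtmBlock N w n` is the prefix `θ_1 ⋯ θ_{2^n p}`. -/
def gtmBlock (N : ℕ) (w : List ℕ) : ℕ → List ℕ
  | 0 => plusB w
  | n + 1 => gtmBlock N w n ++ plusB (reflB N (gtmBlock N w n))

/-- The generalized Thue–Morse sequence generated by `plusB w`, 0-indexed:
`gtm N w n = θ_{n+1}`. -/
def gtm (N : ℕ) (w : List ℕ) : ℕ → ℕ := fun n => (gtmBlock N w n).getD n 0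

/-- Strict lexicographic order on infinite sequences of digits. -/
def seqLt (a b : ℕ → ℕ) : Prop := ∃ n, (∀ k < n, a k = b k) ∧ a n < b n

/-- Lexicographic order on infinite sequences of digits. -/
def seqLe (a b : ℕ → ℕ) : Prop := seqLt a b ∨ a = b

/-- Shift of a sequence by `k` places. -/
def shift (a : ℕ → ℕ) (k : ℕ) : ℕ → ℕ := fun n => a (n + k)

/-- The periodic sequence `w^∞` obtained by repeating the block `w`. -/
def per (w : List ℕ) : ℕ → ℕ := fun n => w.getD (n % w.length) 0

/-- Reflection of an infinite sequence. -/
def reflSeq (N : ℕ) (a : ℕ → ℕ) : ℕ → ℕ := fun n => N - 1 - a n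

/-- The classical Thue–Morse sequence: parity of the binary digit sum. -/
def tm (i : ℕ) : ℕ := (Nat.digits 2 i).sum % 2

/-- Number of length-`n` words appearing in sequences of `Z`. -/
noncomputable def wordCount (Z : Set (ℕ → ℕ)) (n : ℕ) : ℕ :=
  Set.ncard { u : List ℕ | u.length = n ∧ ∃ d ∈ Z, ∀ k < n, u.getD k 0 = d k }

/-- `Z` has topological entropy `h`. -/
def hasEntropy (Z : Set (ℕ → ℕ)) (h : ℝ) : Prop :=
  Filter.Tendsto (fun n : ℕ => Real.log (wordCount Z n) / n) Filter.atTop (nhds h)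


namespace Stmt15Aux
open Filter Real
def succs (a abar t1 t2 x : ℕ) : Finset ℕ :=
  if x = t1 then Finset.Icc a t2 else if x = a then Finset.Icc abar t1 else Finset.Icc a t1
def succsO (a abar t1 t2 : ℕ) : Option ℕ → Finset ℕ
  | none => Finset.Icc a t1
  | some x => succs a abar t1 t2 x
def W (a abar t1 t2 : ℕ) : ℕ → Finset (List ℕ)
  | 0 => {[]}
  | n + 1 => (W a abar t1 t2 n).biUnion fun w =>
      (succsO a abar t1 t2 w.getLast?).image fun c => w ++ [c]
def tc (a abar t1 t2 n : ℕ) : ℕ :=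
  ((W a abar t1 t2 n).filter fun w => w.getLast? = some t1).card
def bc (a abar t1 t2 n : ℕ) : ℕ :=
  ((W a abar t1 t2 n).filter fun w => w.getLast? = some a).card
def uc (a abar t1 t2 n : ℕ) : ℕ :=
  ((W a abar t1 t2 n).filter fun w => ¬w.getLast? = some t1 ∧ ¬w.getLast? = some a).card

variable {a abar t1 t2 : ℕ}

lemma lenW : ∀ {n w}, w ∈ W a abar t1 t2 n → w.length = n := by
  intro n
  induction n with
  | zero => intro w hw; simp [W] at hw; simp [hw]
  | succ n ih =>
    intro w hw
    simp only [W, Finset.mem_biUnion, Finset.mem_image] at hw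
    obtain ⟨w', hw', c, _, rfl⟩ := hw
    simp [ih hw']

lemma getLast?_W {n : ℕ} {w : List ℕ} (hw : w ∈ W a abar t1 t2 (n+1)) :
    ∃ x, w.getLast? = some x :=
  Option.isSome_iff_exists.mp (List.getLast?_isSome.mpr
    (by intro h; subst h; simpa using lenW hw))

lemma disjW {n : ℕ} (f : Option ℕ → Finset ℕ) :
    ∀ w1 ∈ W a abar t1 t2 n, ∀ w2 ∈ W a abar t1 t2 n, w1 ≠ w2 →
    Disjoint ((f w1.getLast?).image fun c => w1 ++ [c])
      ((f w2.getLast?).image fun c => w2 ++ [c]) := by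
  intro w1 h1 w2 h2 hne
  rw [Finset.disjoint_left]
  rintro l hl1 hl2
  simp only [Finset.mem_image] at hl1 hl2
  obtain ⟨c1, _, rfl⟩ := hl1
  obtain ⟨c2, _, heq⟩ := hl2
  have : w2 = w1 := (List.append_inj heq (by rw [lenW h2, lenW h1])).1
  exact hne this.symm

lemma card_filter_W_succ (p : ℕ → Prop) [DecidablePred p] (n : ℕ) :
    ((W a abar t1 t2 (n+1)).filter fun w : List ℕ =>
        ∃ x, w.getLast? = some x ∧ p x).card =
      ∑ w ∈ W a abar t1 t2 n, ((succsO a abar t1 t2 w.getLast?).filter p).card := by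
  rw [W, Finset.filter_biUnion]
  rw [Finset.card_biUnion]
  · apply Finset.sum_congr rfl
    intro w hw
    rw [Finset.filter_image]
    rw [Finset.card_image_of_injective _ (fun c1 c2 h => by simpa using h)]
    congr 1
    apply Finset.filter_congr
    intro c _
    simp
  · intro w1 h1 w2 h2 hne
    have := disjW (fun o => (succsO a abar t1 t2 o).filter p) w1 h1 w2 h2 hne
    simp only [Finset.filter_image] at *
    convert this using 2 <;> · apply Finset.filter_congr; intro c _; simp

lemma card_not_top (hne : t1 ≠ a) (s : Finset (List ℕ)) :
    ((s.filter fun w => ¬w.getLast? = some t1)).card =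
      (s.filter fun w => w.getLast? = some a).card +
      (s.filter fun w => ¬w.getLast? = some t1 ∧ ¬w.getLast? = some a).card := by
  rw [← Finset.card_filter_add_card_filter_not
    (p := fun w => w.getLast? = some a) (s := s.filter fun w => ¬w.getLast? = some t1)]
  congr 1
  · congr 1
    rw [Finset.filter_filter]
    apply Finset.filter_congr
    intro w _
    constructor
    · exact fun h => h.2
    · intro h; refine ⟨?_, h⟩; rw [h]; simp; omega
  · congr 1
    rw [Finset.filter_filter]

lemma card_not_bot (hne : t1 ≠ a) (s : Finset (List ℕ)) :
    ((s.filter fun w => ¬w.getLast? = some a)).card =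
      (s.filter fun w => w.getLast? = some t1).card +
      (s.filter fun w => ¬w.getLast? = some t1 ∧ ¬w.getLast? = some a).card := by
  rw [← Finset.card_filter_add_card_filter_not
    (p := fun w => w.getLast? = some t1) (s := s.filter fun w => ¬w.getLast? = some a)]
  congr 1
  · congr 1
    rw [Finset.filter_filter]
    apply Finset.filter_congr
    intro w _
    constructor
    · exact fun h => h.2
    · intro h; refine ⟨?_, h⟩; rw [h]; simp; omega
  · congr 1
    rw [Finset.filter_filter]
    apply Finset.filter_congr
    intro w _
    tauto

lemma card_partition (hne : t1 ≠ a) (s : Finset (List ℕ)) :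
    s.card = (s.filter fun w => w.getLast? = some t1).card +
      ((s.filter fun w => w.getLast? = some a).card +
      (s.filter fun w => ¬w.getLast? = some t1 ∧ ¬w.getLast? = some a).card) := by
  rw [← card_not_top hne, Finset.card_filter_add_card_filter_not]

section hyps
variable (h1 : a ≤ t2) (h2 : t2 < t1) (h3 : a < abar) (h4 : abar ≤ t1)
  (hsum : abar + t2 = a + t1)

omit h3 in
include h1 h2 h4 in
lemma t1_mem_succsO (o : Option ℕ) : t1 ∈ succsO a abar t1 t2 o ↔ o ≠ some t1 := by
  match o with
  | none => simp [succsO, Finset.mem_Icc]; omega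
  | some x =>
    simp only [succsO, succs]
    split_ifs with hx hx2 <;> simp_all [Finset.mem_Icc] <;> omega

omit h4 in
include h1 h2 h3 in
lemma a_mem_succsO (o : Option ℕ) : a ∈ succsO a abar t1 t2 o ↔ o ≠ some a := by
  match o with
  | none => simp [succsO, Finset.mem_Icc]; omega
  | some x =>
    simp only [succsO, succs]
    split_ifs with hx hx2 <;> simp_all [Finset.mem_Icc] <;> omega

include h1 h2 h3 h4 hsum in
lemma card_int_succsO (o : Option ℕ) :
    ((succsO a abar t1 t2 o).filter fun c => ¬c = t1 ∧ ¬c = a).card =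
      if o = some t1 ∨ o = some a then t2 - a else t1 - 1 - a := by
  have e1 : (Finset.Icc a t2).filter (fun c => ¬c = t1 ∧ ¬c = a) = Finset.Icc (a+1) t2 := by
    ext c; simp [Finset.mem_Icc]; omega
  have e2 : (Finset.Icc abar t1).filter (fun c => ¬c = t1 ∧ ¬c = a) = Finset.Icc abar (t1-1) := by
    ext c; simp [Finset.mem_Icc]; omega
  have e3 : (Finset.Icc a t1).filter (fun c => ¬c = t1 ∧ ¬c = a) = Finset.Icc (a+1) (t1-1) := by
    ext c; simp [Finset.mem_Icc]; omega
  match o with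
  | none =>
    simp only [succsO, e3, Nat.card_Icc]
    rw [if_neg (by simp)]
    omega
  | some x =>
    simp only [succsO, succs]
    by_cases hx : x = t1
    · subst hx; rw [if_pos rfl, if_pos (Or.inl rfl), e1, Nat.card_Icc]; omega
    · by_cases hx2 : x = a
      · subst hx2; rw [if_neg hx, if_pos rfl, if_pos (Or.inr rfl), e2, Nat.card_Icc]; omega
      · rw [if_neg hx, if_neg hx2, if_neg (by simp [hx, hx2]), e3, Nat.card_Icc]; omega

omit h3 in
include h1 h2 h4 in
lemma tc_succ (n : ℕ) :
    tc a abar t1 t2 (n+1) = bc a abar t1 t2 n + uc a abar t1 t2 n := by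
  have hpred : ((W a abar t1 t2 (n+1)).filter fun w => w.getLast? = some t1) =
      ((W a abar t1 t2 (n+1)).filter fun w : List ℕ =>
        ∃ x, w.getLast? = some x ∧ x = t1) := by
    apply Finset.filter_congr
    intro w _
    constructor
    · intro h; exact ⟨t1, h, rfl⟩
    · rintro ⟨x, h, rfl⟩; exact h
  rw [tc, hpred, card_filter_W_succ]
  have : ∀ w ∈ W a abar t1 t2 n,
      ((succsO a abar t1 t2 w.getLast?).filter fun c => c = t1).card =
        if ¬ w.getLast? = some t1 then 1 else 0 := by
    intro w _
    rw [Finset.filter_eq']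
    by_cases h : w.getLast? = some t1
    · rw [if_neg (by rw [(t1_mem_succsO h1 h2 h4 _)]; simp [h]), if_neg (by simp [h])]
      simp
    · rw [if_pos ((t1_mem_succsO h1 h2 h4 _).mpr h), if_pos h]
      simp
  rw [Finset.sum_congr rfl this, ← Finset.card_filter, card_not_top (a := a) (show t1 ≠ a by omega), bc, uc]

omit h4 in
include h1 h2 h3 in
lemma bc_succ (n : ℕ) :
    bc a abar t1 t2 (n+1) = tc a abar t1 t2 n + uc a abar t1 t2 n := by
  have hpred : ((W a abar t1 t2 (n+1)).filter fun w => w.getLast? = some a) =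
      ((W a abar t1 t2 (n+1)).filter fun w : List ℕ =>
        ∃ x, w.getLast? = some x ∧ x = a) := by
    apply Finset.filter_congr
    intro w _
    constructor
    · intro h; exact ⟨a, h, rfl⟩
    · rintro ⟨x, h, rfl⟩; exact h
  rw [bc, hpred, card_filter_W_succ]
  have : ∀ w ∈ W a abar t1 t2 n,
      ((succsO a abar t1 t2 w.getLast?).filter fun c => c = a).card =
        if ¬ w.getLast? = some a then 1 else 0 := by
    intro w _
    rw [Finset.filter_eq']
    by_cases h : w.getLast? = some a
    · rw [if_neg (by rw [(a_mem_succsO h1 h2 h3 _)]; simp [h]), if_neg (by simp [h])]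
      simp
    · rw [if_pos ((a_mem_succsO h1 h2 h3 _).mpr h), if_pos h]
      simp
  rw [Finset.sum_congr rfl this, ← Finset.card_filter, card_not_bot (a := a) (show t1 ≠ a by omega), tc, uc]

include h1 h2 h3 h4 hsum in
lemma uc_succ (n : ℕ) :
    uc a abar t1 t2 (n+1) = (t2 - a) * (tc a abar t1 t2 n + bc a abar t1 t2 n)
      + (t1 - 1 - a) * uc a abar t1 t2 n := by
  have hpred : ((W a abar t1 t2 (n+1)).filter fun w =>
        ¬w.getLast? = some t1 ∧ ¬w.getLast? = some a) =
      ((W a abar t1 t2 (n+1)).filter fun w : List ℕ =>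
        ∃ x, w.getLast? = some x ∧ (¬x = t1 ∧ ¬x = a)) := by
    apply Finset.filter_congr
    intro w hw
    obtain ⟨x, hx⟩ := getLast?_W hw
    rw [hx]
    constructor
    · rintro ⟨ha, hb⟩
      exact ⟨x, rfl, by simpa using ha, by simpa using hb⟩
    · rintro ⟨y, hy, hy1, hy2⟩
      cases hy
      constructor <;> simp [hy1, hy2]
  rw [uc, hpred, card_filter_W_succ]
  have : ∀ w ∈ W a abar t1 t2 n,
      ((succsO a abar t1 t2 w.getLast?).filter fun c => ¬c = t1 ∧ ¬c = a).card =
        if w.getLast? = some t1 ∨ w.getLast? = some a then t2 - a else t1 - 1 - a := by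
    intro w _
    exact card_int_succsO h1 h2 h3 h4 hsum _
  rw [Finset.sum_congr rfl this, Finset.sum_ite, Finset.sum_const, Finset.sum_const]
  have hsplit : ((W a abar t1 t2 n).filter fun w =>
        w.getLast? = some t1 ∨ w.getLast? = some a).card =
      tc a abar t1 t2 n + bc a abar t1 t2 n := by
    rw [Finset.filter_or, Finset.card_union_of_disjoint, tc, bc]
    rw [Finset.disjoint_left]
    intro w hw1 hw2
    simp only [Finset.mem_filter] at hw1 hw2
    rw [hw1.2] at hw2
    have := hw2.2
    simp at this
    omega
  have hsplit2 : ((W a abar t1 t2 n).filter fun w =>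
        ¬(w.getLast? = some t1 ∨ w.getLast? = some a)).card = uc a abar t1 t2 n := by
    rw [uc]
    congr 1
    apply Finset.filter_congr
    intro w _
    tauto
  rw [hsplit, hsplit2, smul_eq_mul, smul_eq_mul]
  ring

omit h2 h3 h4 hsum in
include h1 in
lemma tc_zero : tc a abar t1 t2 0 = 0 := by simp [tc, W, Finset.filter_singleton]
omit h1 h2 h3 h4 hsum in
lemma bc_zero : bc a abar t1 t2 0 = 0 := by simp [bc, W, Finset.filter_singleton]
omit h1 h2 h3 h4 hsum in
lemma uc_zero : uc a abar t1 t2 0 = 1 := by simp [uc, W, Finset.filter_singleton]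

include h1 h2 h3 h4 in
lemma tc_eq_bc : ∀ n, tc a abar t1 t2 n = bc a abar t1 t2 n := by
  intro n
  induction n with
  | zero => rw [tc_zero h1, bc_zero]
  | succ n ih => rw [tc_succ h1 h2 h4, bc_succ h1 h2 h3, ih]

include h1 h2 in
lemma cardW_eq (n : ℕ) : (W a abar t1 t2 n).card =
    tc a abar t1 t2 n + (bc a abar t1 t2 n + uc a abar t1 t2 n) :=
  card_partition (a := a) (show t1 ≠ a by omega) _
end hyps

section hyps2
variable {a abar t1 t2 : ℕ}
theorem pair_le_iff (p q r s : ℕ) : [p,q] ≤ [r,s] ↔ p < r ∨ (p = r ∧ q ≤ s) := by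
  rw [le_iff_lt_or_eq]
  constructor
  · rintro (h | h)
    · change List.Lex _ _ _ at h
      rcases h with _ | h | h
      · exact Or.inl h
      · rcases h with _ | h | h
        · exact Or.inr ⟨rfl, le_of_lt h⟩
        · cases h
    · simp_all
  · rintro (h | ⟨rfl, h⟩)
    · exact Or.inl (List.Lex.rel h)
    · rcases lt_or_eq_of_le h with h | rfl
      · exact Or.inl (List.Lex.cons (List.Lex.rel h))
      · exact Or.inr rfl

section hyps
variable (h1 : a ≤ t2) (h2 : t2 < t1) (h3 : a < abar) (h4 : abar ≤ t1)

include h1 h2 h3 h4 in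
lemma succsO_subset (o : Option ℕ) : succsO a abar t1 t2 o ⊆ Finset.Icc a t1 := by
  match o with
  | none => exact Finset.Subset.refl _
  | some x =>
    simp only [succsO, succs]
    split_ifs
    · exact Finset.Icc_subset_Icc le_rfl (by omega)
    · exact Finset.Icc_subset_Icc (by omega) le_rfl
    · exact Finset.Subset.refl _

include h1 h2 h3 h4 in
lemma goodW : ∀ {n w}, w ∈ W a abar t1 t2 n →
    (∀ k < n, w.getD k 0 ∈ Finset.Icc a t1) ∧
    (∀ k, k + 1 < n → w.getD (k+1) 0 ∈ succs a abar t1 t2 (w.getD k 0)) ∧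
    (n ≠ 0 → w.getLast? = some (w.getD (n-1) 0)) := by
  intro n
  induction n with
  | zero => intro w _; exact ⟨by omega, by omega, by omega⟩
  | succ n ih =>
    intro w hw
    simp only [W, Finset.mem_biUnion, Finset.mem_image] at hw
    obtain ⟨w', hw', c, hc, rfl⟩ := hw
    have hlen : w'.length = n := lenW hw'
    obtain ⟨ihA, ihB, ihC⟩ := ih hw'
    have hgetn : (w' ++ [c]).getD n 0 = c := by
      rw [List.getD_eq_getElem _ _ (by simp [hlen])]
      simp [← hlen]
    have hgetlt : ∀ k < n, (w' ++ [c]).getD k 0 = w'.getD k 0 := by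
      intro k hk
      exact List.getD_append _ _ _ _ (by omega)
    refine ⟨?_, ?_, ?_⟩
    · intro k hk
      rcases Nat.lt_or_ge k n with h | h
      · rw [hgetlt k h]; exact ihA k h
      · have : k = n := by omega
        subst this
        rw [hgetn]
        exact succsO_subset h1 h2 h3 h4 _ hc
    · intro k hk
      rcases Nat.lt_or_ge (k+1) n with h | h
      · rw [hgetlt (k+1) h, hgetlt k (by omega)]
        exact ihB k h
      · have hkn : k + 1 = n := by omega
        have hn0 : n ≠ 0 := by omega
        rw [show k = n - 1 by omega, hgetlt (n-1) (by omega)]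
        rw [show n - 1 + 1 = n by omega, hgetn]
        have := ihC hn0
        rw [this] at hc
        exact hc
    · intro _
      simp only [Nat.add_sub_cancel, hgetn]
      simp
end hyps
section hyps
variable (h1 : a ≤ t2) (h2 : t2 < t1) (h3 : a < abar) (h4 : abar ≤ t1)

include h1 h2 h4 in
lemma t1_mem_succs_a : t1 ∈ succs a abar t1 t2 a := by
  unfold succs
  rw [if_neg (by omega), if_pos rfl]
  simp [Finset.mem_Icc]
  omega

include h1 h2 in
lemma a_mem_succs (x : ℕ) (hx : x ≠ a) : a ∈ succs a abar t1 t2 x := by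
  unfold succs
  split_ifs <;> simp [Finset.mem_Icc] <;> omega

include h1 h2 h3 h4 in
lemma pairs_of_edge (x y : ℕ) (hx : x ∈ Finset.Icc a t1) (hy : y ∈ succs a abar t1 t2 x) :
    [a, abar] ≤ [x, y] ∧ [x, y] ≤ [t1, t2] := by
  rw [pair_le_iff, pair_le_iff]
  rw [Finset.mem_Icc] at hx
  unfold succs at hy
  split_ifs at hy <;> rw [Finset.mem_Icc] at hy <;> omega

include h1 h2 h3 h4 in
lemma edge_of_pairs (x y z : ℕ)
    (hxy1 : [a, abar] ≤ [x, y]) (hxy2 : [x, y] ≤ [t1, t2])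
    (hyz1 : [a, abar] ≤ [y, z]) (hyz2 : [y, z] ≤ [t1, t2]) :
    x ∈ Finset.Icc a t1 ∧ y ∈ succs a abar t1 t2 x := by
  rw [pair_le_iff] at hxy1 hxy2 hyz1 hyz2
  rw [Finset.mem_Icc]
  unfold succs
  split_ifs <;> rw [Finset.mem_Icc] <;> omega

include h1 h2 h3 h4 in
lemma memW_ofFn (d : ℕ → ℕ) (hd : ∀ k, d k ∈ Finset.Icc a t1)
    (he : ∀ k, d (k+1) ∈ succs a abar t1 t2 (d k)) :
    ∀ n, (List.ofFn fun i : Fin n => d i) ∈ W a abar t1 t2 n := by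
  intro n
  induction n with
  | zero => simp [W]
  | succ n ih =>
    rw [List.ofFn_succ']
    simp only [List.concat_eq_append, W, Finset.mem_biUnion]
    refine ⟨_, ih, ?_⟩
    rw [Finset.mem_image]
    refine ⟨d n, ?_, rfl⟩
    match n with
    | 0 => simpa [succsO] using hd 0
    | m + 1 =>
      have h3rd := (goodW h1 h2 h3 h4 ih).2.2 (by omega)
      rw [h3rd]
      have hg : (List.ofFn fun i : Fin (m+1) => d i).getD (m + 1 - 1) 0 = d m := by
        rw [List.getD_eq_getElem _ _ (by simp), List.getElem_ofFn]
        rfl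
      rw [hg]
      exact he m

include h1 h2 h3 h4 in
lemma setEqW (n : ℕ) :
    {u : List ℕ | u.length = n ∧ ∃ d : ℕ → ℕ, (∀ k, [a, abar] ≤ [d k, d (k+1)] ∧
        [d k, d (k+1)] ≤ [t1, t2]) ∧ ∀ k < n, u.getD k 0 = d k} =
      ↑(W a abar t1 t2 n) := by
  ext u
  simp only [Set.mem_setOf_eq, Finset.coe_sort_coe, Finset.mem_coe]
  constructor
  · rintro ⟨hlen, d, hP, hmatch⟩
    have hedge : ∀ k, d k ∈ Finset.Icc a t1 ∧ d (k+1) ∈ succs a abar t1 t2 (d k) := by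
      intro k
      exact edge_of_pairs h1 h2 h3 h4 _ _ _ (hP k).1 (hP k).2 (hP (k+1)).1 (hP (k+1)).2
    have hu : u = List.ofFn fun i : Fin n => d i := by
      apply List.ext_getElem (by simp [hlen])
      intro k hk _
      rw [← List.getD_eq_getElem u 0 hk]
      simp only [List.getElem_ofFn]
      exact hmatch k (by omega)
    rw [hu]
    exact memW_ofFn h1 h2 h3 h4 d (fun k => (hedge k).1) (fun k => (hedge k).2) n
  · intro hw
    obtain ⟨gA, gB, gC⟩ := goodW h1 h2 h3 h4 hw
    refine ⟨lenW hw, ?_⟩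
    obtain ⟨c0, hc0⟩ : ∃ c0 : ℕ, c0 = if u.getLast? = some a then t1 else a := ⟨_, rfl⟩
    obtain ⟨c1, hc1⟩ : ∃ c1 : ℕ, c1 = if u.getLast? = some a then a else t1 := ⟨_, rfl⟩
    obtain ⟨d, hd⟩ : ∃ d : ℕ → ℕ, ∀ k, d k = if k < n then u.getD k 0 else
      if (k - n) % 2 = 0 then c0 else c1 := ⟨_, fun _ => rfl⟩
    have hc0m : c0 ∈ Finset.Icc a t1 := by
      rw [hc0]; split_ifs <;> simp [Finset.mem_Icc] <;> omega
    have hc1m : c1 ∈ Finset.Icc a t1 := by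
      rw [hc1]; split_ifs <;> simp [Finset.mem_Icc] <;> omega
    have hc01 : c1 ∈ succs a abar t1 t2 c0 ∧ c0 ∈ succs a abar t1 t2 c1 := by
      rw [hc0, hc1]
      split_ifs
      · exact ⟨a_mem_succs h1 h2 _ (by omega), t1_mem_succs_a h1 h2 h4⟩
      · exact ⟨t1_mem_succs_a h1 h2 h4, a_mem_succs h1 h2 _ (by omega)⟩
    have hdm : ∀ k, d k ∈ Finset.Icc a t1 := by
      intro k
      rw [hd k]
      split_ifs with h h'
      · exact gA k h
      · exact hc0m
      · exact hc1m
    have hedge : ∀ k, d (k+1) ∈ succs a abar t1 t2 (d k) := by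
      intro k
      rcases Nat.lt_trichotomy (k+1) n with h | h | h
      · rw [hd k, hd (k+1)]
        rw [if_pos h, if_pos (by omega)]
        exact gB k (by omega)
      · -- k + 1 = n
        have hk : k < n := by omega
        have hn0 : n ≠ 0 := by omega
        have hgl := gC hn0
        have hdk : d k = u.getD (n-1) 0 := by
          rw [hd k, if_pos hk]; congr 1; omega
        have hdk1 : d (k+1) = c0 := by
          rw [hd (k+1), if_neg (by omega), if_pos (by omega)]
        rw [hdk, hdk1]
        by_cases hlast : u.getD (n-1) 0 = a
        · have : c0 = t1 := by rw [hc0, if_pos (by rw [hgl, hlast])]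
          rw [this, hlast]
          exact t1_mem_succs_a h1 h2 h4
        · have : c0 = a := by
            rw [hc0, if_neg]
            rw [hgl]
            intro hcon
            exact hlast (by injection hcon)
          rw [this]
          exact a_mem_succs h1 h2 _ hlast
      · -- k ≥ n
        have hdk : d k = if (k - n) % 2 = 0 then c0 else c1 := by
          rw [hd k, if_neg (by omega)]
        have hdk1 : d (k+1) = if (k + 1 - n) % 2 = 0 then c0 else c1 := by
          rw [hd (k+1), if_neg (by omega)]
        have hpar : k + 1 - n = (k - n) + 1 := by omega
        rcases Nat.mod_two_eq_zero_or_one (k - n) with hp | hp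
        · rw [hdk, hdk1, hpar, if_pos hp, if_neg (by omega)]
          exact hc01.1
        · rw [hdk, hdk1, hpar, if_neg (by omega), if_pos (by omega)]
          exact hc01.2
    refine ⟨d, ?_, ?_⟩
    · intro k
      exact pairs_of_edge h1 h2 h3 h4 _ _ (hdm k) (hedge k)
    · intro k hk
      rw [hd k, if_pos hk]
end hyps

end hyps2


lemma aux_log_lim : Tendsto (fun n : ℕ => Real.log (2*n+1) / n) atTop (nhds 0) := by
  have hcomp : Tendsto (fun n : ℕ => (2*(n:ℝ)+1)) atTop atTop := by
    apply Filter.tendsto_atTop_add_const_right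
    exact Tendsto.const_mul_atTop two_pos tendsto_natCast_atTop_atTop
  have ht1 : Tendsto (fun n : ℕ => Real.log (2*n+1) / (2*n+1)) atTop (nhds 0) :=
    (Real.isLittleO_log_id_atTop.tendsto_div_nhds_zero).comp hcomp
  have ht2 : Tendsto (fun n : ℕ => (2*(n:ℝ)+1)/n) atTop (nhds 2) := by
    have hb : Tendsto (fun n : ℕ => 2 + 1/(n:ℝ)) atTop (nhds 2) := by
      have h1 := tendsto_one_div_atTop_nhds_zero_nat (𝕜 := ℝ)
      have h2 : Tendsto (fun _ : ℕ => (2:ℝ)) atTop (nhds 2) := tendsto_const_nhds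
      simpa using h2.add h1
    apply Tendsto.congr' _ hb
    filter_upwards [eventually_ge_atTop 1] with n hn
    have : (n:ℝ) ≠ 0 := by simp only [ne_eq, Nat.cast_eq_zero]; omega
    field_simp
  have hprod := ht1.mul ht2
  rw [zero_mul] at hprod
  apply Tendsto.congr' _ hprod
  filter_upwards [eventually_ge_atTop 1] with n hn
  have h1 : (n:ℝ) ≠ 0 := by simp only [ne_eq, Nat.cast_eq_zero]; omega
  have h2 : 2*(n:ℝ)+1 ≠ 0 := by positivity
  field_simp

lemma entropy_limit (A1 B1 s1r m2r : ℝ) (F tcv ucv : ℕ → ℝ)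
    (hA1 : 1 ≤ A1) (hs1 : 0 ≤ s1r) (hm2 : m2r = A1 - 1)
    (h2s : 2*s1r = A1 + B1 - 1) (hB1le : B1 ≤ A1 + 1)
    (htc0 : tcv 0 = 0) (huc0 : ucv 0 = 1)
    (htc : ∀ n, tcv (n+1) = tcv n + ucv n)
    (huc : ∀ n, ucv (n+1) = m2r * ucv n + 2*s1r*tcv n)
    (htcnn : ∀ n, 0 ≤ tcv n)
    (hF : ∀ n, F n = ucv n + 2 * tcv n) :
    Tendsto (fun n : ℕ => Real.log (F n) / n) atTop
      (nhds (Real.log ((A1 + Real.sqrt (A1^2+4*B1))/2))) := by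
  have hB1ge : 1 - A1 ≤ B1 := by linarith
  have hDD : (0:ℝ) ≤ A1^2 + 4*B1 := by nlinarith [sq_nonneg (A1-2)]
  obtain ⟨S, hSdef⟩ : ∃ S : ℝ, S = Real.sqrt (A1^2+4*B1) := ⟨_, rfl⟩
  have hsq : S^2 = A1^2 + 4*B1 := by rw [hSdef]; exact Real.sq_sqrt hDD
  have hsnn : 0 ≤ S := by rw [hSdef]; exact Real.sqrt_nonneg _
  obtain ⟨L, hLdef⟩ : ∃ L : ℝ, L = (A1 + S)/2 := ⟨_, rfl⟩
  have hgoal : (A1 + Real.sqrt (A1^2+4*B1))/2 = L := by rw [hLdef, hSdef]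
  rw [hgoal]
  have hL2 : L^2 = A1 * L + B1 := by
    rw [hLdef]; linear_combination (1/4) * hsq
  have hS_ge : 2 - A1 ≤ S := by
    nlinarith [hsq, hsnn, hB1ge, sq_nonneg (S - (2-A1)), sq_nonneg (S + (2-A1))]
  have hS_geA : A1 - 2 ≤ S := by
    nlinarith [hsq, hsnn, sq_nonneg (S - (A1-2)), sq_nonneg (S + (A1-2))]
  have hS_le : S ≤ A1 + 2 := by
    nlinarith [hsq, hsnn, hB1le, hA1]
  have hL1 : 1 ≤ L := by rw [hLdef]; linarith
  have hLup : L ≤ A1 + 1 := by rw [hLdef]; linarith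
  obtain ⟨c, hcdef⟩ : ∃ c : ℝ, c = L - (A1 - 1) := ⟨_, rfl⟩
  have hcnn : 0 ≤ c := by rw [hcdef, hLdef]; linarith
  have hcle : c ≤ 2 := by rw [hcdef]; linarith
  have hckey : c * (L - 1) = 2 * s1r := by
    rw [h2s, hcdef]
    linear_combination hL2
  have hLpos : 0 < L := by linarith
  have hcons : ∀ n, ucv n + c * tcv n = L^n := by
    intro n
    induction n with
    | zero => simp [htc0, huc0]
    | succ n ih =>
      rw [htc n, huc n, pow_succ, ← ih, hm2]
      linear_combination (-(tcv n)) * hckey + (ucv n) * hcdef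
  have hucle : ∀ n, ucv n ≤ L^n := by
    intro n
    have h := hcons n
    nlinarith [htcnn n, hcnn]
  have hFlow : ∀ n, L^n ≤ F n := by
    intro n
    have h := hcons n
    rw [hF n]
    nlinarith [htcnn n]
  have htcle : ∀ n, tcv n ≤ n * L^n := by
    intro n
    induction n with
    | zero => simp [htc0]
    | succ n ih =>
      rw [htc n]
      have h2 : ((n:ℝ)+1) * L^n ≤ ((n:ℝ)+1) * L^(n+1) :=
        mul_le_mul_of_nonneg_left (pow_le_pow_right₀ hL1 (Nat.le_succ n)) (by positivity)
      have h3 := hucle n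
      push_cast
      linarith
  have hFup : ∀ n, F n ≤ (2*n+1) * L^n := by
    intro n
    rw [hF n]
    have h1 := hucle n
    have h2 := htcle n
    have expand : (2*(n:ℝ)+1)*L^n = 2*((n:ℝ)*L^n) + L^n := by ring
    linarith
  have hF1 : ∀ n, (1:ℝ) ≤ F n := by
    intro n
    have h1 := hFlow n
    have h2 : (1:ℝ)^n ≤ L^n := pow_le_pow_left₀ (by norm_num) hL1 n
    simp only [one_pow] at h2
    linarith
  have hlogL : 0 ≤ Real.log L := Real.log_nonneg hL1
  apply tendsto_of_tendsto_of_tendsto_of_le_of_le'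
    (g := fun _ : ℕ => Real.log L)
    (h := fun n : ℕ => Real.log L + Real.log (2*n+1) / n)
  · exact tendsto_const_nhds
  · have hadd : Tendsto (fun n : ℕ => Real.log L + Real.log (2*n+1)/n) atTop
        (nhds (Real.log L + 0)) := Tendsto.const_add _ aux_log_lim
    simpa using hadd
  · filter_upwards [eventually_ge_atTop 1] with n hn
    have hnp : (0:ℝ) < n := by simp only [Nat.cast_pos]; omega
    rw [le_div_iff₀ hnp]
    have h1 : Real.log (L^n) ≤ Real.log (F n) :=
      Real.log_le_log (pow_pos hLpos n) (hFlow n)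
    rw [Real.log_pow] at h1
    calc Real.log L * n = n * Real.log L := by ring
    _ ≤ Real.log (F n) := by exact_mod_cast h1
  · filter_upwards [eventually_ge_atTop 1] with n hn
    have hnp : (0:ℝ) < n := by simp only [Nat.cast_pos]; omega
    rw [div_le_iff₀ hnp]
    have h1 : Real.log (F n) ≤ Real.log ((2*n+1) * L^n) :=
      Real.log_le_log (by linarith [hF1 n]) (hFup n)
    have h2 : Real.log ((2*(n:ℝ)+1) * L^n) = Real.log (2*n+1) + n * Real.log L := by
      rw [Real.log_mul (by positivity) (by positivity), Real.log_pow]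
    rw [h2] at h1
    calc Real.log (F n) ≤ Real.log (2*n+1) + n * Real.log L := h1
    _ = (Real.log L + Real.log (2*n+1)/n) * n := by
      rw [add_mul, div_mul_cancel₀ _ (ne_of_gt hnp)]
      ring

end Stmt15Aux

/-- Theorem 7.2 (entropy part) — for an admissible block `t_1 t_2`
of length 2 one has `⌈(N-1)/2⌉ = N/2 ≤ t_1 ≤ N-1`, `N-1-t_1 ≤ t_2 < t_1`, and the
subshift `Z_{t_1 t_2}` has topological entropy
`log ((2t_1+1-N + √((2t_1+1-N)² + 4(2t_2+2-N)))/2)`. -/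
theorem stmt15 (N : ℕ) (hN : 2 ≤ N) (t1 t2 : ℕ) (hadm : Admissible N [t1, t2]) :
    N / 2 ≤ t1 ∧ t1 ≤ N - 1 ∧ N - 1 - t1 ≤ t2 ∧ t2 < t1 ∧
    hasEntropy
      {d : ℕ → ℕ | ∀ n, [N - 1 - t1, N - 1 - t2] ≤ [d n, d (n + 1)] ∧
        [d n, d (n + 1)] ≤ [t1, t2]}
      (Real.log ((2 * (t1 : ℝ) + 1 - N +
        Real.sqrt ((2 * (t1 : ℝ) + 1 - N) ^ 2 + 4 * (2 * (t2 : ℝ) + 2 - N))) / 2)) := by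
  obtain ⟨hne, hmem, hlast, hineq⟩ := hadm
  have ht1N : t1 < N := hmem t1 (by simp)
  have ht2N : t2 < N := hmem t2 (by simp)
  have hlast' : t2 < N - 1 := hlast
  have H0 := (hineq 0 (by norm_num)).1
  have H1 := (hineq 1 (by norm_num)).1
  have H1b := (hineq 1 (by norm_num)).2
  have e0 : reflB N [t1,t2] = [N-1-t1, N-1-t2] := rfl
  have e1 : rotB [t1,t2] 0 = [t1,t2] := rfl
  have e2 : rotB [t1,t2] 1 = [t2,t1] := rfl
  have e3 : plusB ([t1,t2].drop 1) ++ reflB N ([t1,t2].take 1) = [t2+1, N-1-t1] := rfl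
  have e4 : plusB [t1,t2] = [t1, t2+1] := rfl
  rw [e0, e1, Stmt15Aux.pair_le_iff] at H0
  rw [e0, e2, Stmt15Aux.pair_le_iff] at H1
  rw [e3, e4, Stmt15Aux.pair_le_iff] at H1b
  have hB : t1 ≤ N - 1 := by omega
  have hD : t2 < t1 := by omega
  have hC : N - 1 - t1 ≤ t2 := by omega
  have hA : N / 2 ≤ t1 := by omega
  refine ⟨hA, hB, hC, hD, ?_⟩
  have h1 : N-1-t1 ≤ t2 := hC
  have h2 : t2 < t1 := hD
  have h3 : N-1-t1 < N-1-t2 := by omega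
  have h4 : N-1-t2 ≤ t1 := by omega
  have hsum : (N-1-t2) + t2 = (N-1-t1) + t1 := by omega
  have h2t1 : N ≤ 2*t1 := by omega
  rw [hasEntropy]
  have hwc : ∀ n, wordCount {d : ℕ → ℕ | ∀ n, [N - 1 - t1, N - 1 - t2] ≤ [d n, d (n + 1)] ∧
      [d n, d (n + 1)] ≤ [t1, t2]} n = (Stmt15Aux.W (N-1-t1) (N-1-t2) t1 t2 n).card := by
    intro n
    have hset := Stmt15Aux.setEqW h1 h2 h3 h4 n
    rw [wordCount]
    rw [show { u : List ℕ | u.length = n ∧ ∃ d ∈ {d : ℕ → ℕ | ∀ n,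
        [N - 1 - t1, N - 1 - t2] ≤ [d n, d (n + 1)] ∧ [d n, d (n + 1)] ≤ [t1, t2]},
        ∀ k < n, u.getD k 0 = d k } =
      {u : List ℕ | u.length = n ∧ ∃ d : ℕ → ℕ, (∀ k, [N-1-t1, N-1-t2] ≤ [d k, d (k+1)] ∧
        [d k, d (k+1)] ≤ [t1, t2]) ∧ ∀ k < n, u.getD k 0 = d k} from rfl]
    rw [hset, Set.ncard_coe_finset]
  have hlim := Stmt15Aux.entropy_limit (2*(t1:ℝ)+1-N) (2*(t2:ℝ)+2-N)
    ((t2 - (N-1-t1) : ℕ) : ℝ) ((t1 - 1 - (N-1-t1) : ℕ) : ℝ)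
    (fun n => ((Stmt15Aux.W (N-1-t1) (N-1-t2) t1 t2 n).card : ℝ))
    (fun n => ((Stmt15Aux.tc (N-1-t1) (N-1-t2) t1 t2 n) : ℝ))
    (fun n => ((Stmt15Aux.uc (N-1-t1) (N-1-t2) t1 t2 n) : ℝ))
    ?_ ?_ ?_ ?_ ?_ ?_ ?_ ?_ ?_ ?_ ?_
  · apply hlim.congr
    intro n
    rw [hwc n]
  · -- 1 ≤ A1
    have : (N:ℝ) ≤ 2*t1 := by exact_mod_cast h2t1
    linarith
  · exact Nat.cast_nonneg _
  · -- m2r = A1 - 1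
    have hid : (t1 - 1 - (N-1-t1)) + N = 2*t1 := by omega
    have := congrArg (fun x : ℕ => (x:ℝ)) hid
    push_cast at this
    linarith
  · -- 2*s1r = A1 + B1 - 1
    have hid : (t2 - (N-1-t1)) + N = t2 + t1 + 1 := by omega
    have := congrArg (fun x : ℕ => (x:ℝ)) hid
    push_cast at this
    linarith
  · -- B1 ≤ A1 + 1
    have : (t2:ℝ) < t1 := by exact_mod_cast hD
    linarith
  · -- tcv 0 = 0
    rw [Stmt15Aux.tc_zero h1]
    norm_num
  · rw [Stmt15Aux.uc_zero]
    norm_num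
  · -- tc rec
    intro n
    rw [Stmt15Aux.tc_succ h1 h2 h4, ← Stmt15Aux.tc_eq_bc h1 h2 h3 h4 n]
    push_cast
    ring
  · -- uc rec
    intro n
    have hu := Stmt15Aux.uc_succ h1 h2 h3 h4 hsum n
    rw [← Stmt15Aux.tc_eq_bc h1 h2 h3 h4 n] at hu
    rw [hu]
    push_cast
    ring
  · intro n
    exact Nat.cast_nonneg _
  · -- F = uc + 2 tc
    intro n
    rw [Stmt15Aux.cardW_eq h1 h2, ← Stmt15Aux.tc_eq_bc h1 h2 h3 h4 n]
    push_cast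
    ring
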